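/- Let P be a finite Γ-colored poset. Then P is a Γ-colored d-complete poset if and only if P is a dominant minuscule heap. -/

import Mathlib

namespace GCP

/-- A Dynkin diagram on a finite set `Γ` of colors, encoded by the integers
`θ a b` of its generalized Cartan matrix. -/
structure DynkinDiagram (Γ : Type*) [Fintype Γ] where
  θ : Γ → Γ → ℤ
  diag : ∀ a, θ a a = 2
  offdiag_nonpos : ∀ a b, a ≠ b → θ a b ≤ 0
  zero_iff : ∀ a b, a ≠ b → (θ a b = 0 ↔ θ b a = 0)

variable {Γ : Type*} [Fintype Γ] {P : Type*} [PartialOrder P] [LocallyFiniteOrder P]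

/-- Distinct colors `a` and `b` are adjacent when `θ a b < 0`. -/
def DynkinDiagram.Adj (D : DynkinDiagram Γ) (a b : Γ) : Prop :=
  a ≠ b ∧ D.θ a b < 0

/-- Distinct colors `a` and `b` are distant when `θ a b = 0`. -/
def DynkinDiagram.Distant (D : DynkinDiagram Γ) (a b : Γ) : Prop :=
  a ≠ b ∧ D.θ a b = 0

theorem DynkinDiagram.Adj.symm {D : DynkinDiagram Γ} {a b : Γ} (h : D.Adj a b) :
    D.Adj b a :=
  ⟨h.1.symm, lt_of_le_of_ne (D.offdiag_nonpos b a h.1.symm)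
    (fun h0 => h.2.ne ((D.zero_iff a b h.1).mpr h0))⟩

/-- The simple graph underlying a Dynkin diagram, with an edge between each
pair of adjacent colors. -/
def DynkinDiagram.graph (D : DynkinDiagram Γ) : SimpleGraph Γ where
  Adj a b := D.Adj a b
  symm := ⟨fun _ _ h => DynkinDiagram.Adj.symm h⟩
  loopless := ⟨fun _ h => (h : D.Adj _ _).1 rfl⟩

/-- The Dynkin diagram is connected: any two colors are joined by a path of
adjacencies. -/
def DynkinDiagram.Connected (D : DynkinDiagram Γ) : Prop :=
  ∀ a b : Γ, Relation.ReflTransGen D.Adj a b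

/-- A poset is connected: any two elements are linked by a finite chain of
comparabilities (equivalently, the poset cannot be written as the disjoint
union of two nonempty subposets). -/
def PosetConnected (P : Type*) [PartialOrder P] : Prop :=
  ∀ x y : P, Relation.ReflTransGen (fun u v : P => u ≤ v ∨ v ≤ u) x y

/-- `x < y` are consecutive elements of the color `a`. -/
def Consecutive (κ : P → Γ) (a : Γ) (x y : P) : Prop :=
  x < y ∧ κ x = a ∧ κ y = a ∧ ∀ z ∈ Finset.Ioo x y, κ z ≠ a

/-- EC: elements with equal colors are comparable. -/
def EC (κ : P → Γ) : Prop := ∀ x y : P, κ x = κ y → x ≤ y ∨ y ≤ x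

/-- NA: neighbors (covering pairs) have adjacent colors. -/
def NA (D : DynkinDiagram Γ) (κ : P → Γ) : Prop :=
  ∀ x y : P, x ⋖ y → D.Adj (κ x) (κ y)

/-- AC: elements with adjacent colors are comparable. -/
def AC (D : DynkinDiagram Γ) (κ : P → Γ) : Prop :=
  ∀ x y : P, D.Adj (κ x) (κ y) → x ≤ y ∨ y ≤ x

/-- ICE2: the census of the open interval between consecutive elements of a
color is two. -/
def ICE2 (D : DynkinDiagram Γ) (κ : P → Γ) : Prop :=
  ∀ (a : Γ) (x y : P), Consecutive κ a x y →
    ∑ z ∈ Finset.Ioo x y, (-D.θ (κ z) a) = 2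

/-- `U(x,S)`: elements of `S` above `x` with color adjacent to that of `x`. -/
def USet (D : DynkinDiagram Γ) (κ : P → Γ) (S : Set P) (x : P) : Set P :=
  {y ∈ S | x < y ∧ D.Adj (κ y) (κ x)}

/-- `L(x,S)`: elements of `S` below `x` with color adjacent to that of `x`. -/
def LSet (D : DynkinDiagram Γ) (κ : P → Γ) (S : Set P) (x : P) : Set P :=
  {y ∈ S | y < x ∧ D.Adj (κ y) (κ x)}

/-- UCBk: for every `x` maximal among elements of its color, `U(x,P)` is
finite with census at most `k`. -/
def UCB (D : DynkinDiagram Γ) (κ : P → Γ) (k : ℕ) : Prop :=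
  ∀ x : P, (∀ y : P, κ y = κ x → ¬ x < y) →
    ∃ hfin : (USet D κ Set.univ x).Finite,
      ∑ y ∈ hfin.toFinset, (-D.θ (κ y) (κ x)) ≤ (k : ℤ)

/-- LCBk: for every `x` minimal among elements of its color, `L(x,P)` is
finite with census at most `k`. -/
def LCB (D : DynkinDiagram Γ) (κ : P → Γ) (k : ℕ) : Prop :=
  ∀ x : P, (∀ y : P, κ y = κ x → ¬ y < x) →
    ∃ hfin : (LSet D κ Set.univ x).Finite,
      ∑ y ∈ hfin.toFinset, (-D.θ (κ y) (κ x)) ≤ (k : ℤ)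

/-- The coloring properties of a Γ-colored d-complete poset (the coloring is
required to be surjective separately). -/
def DComplete (D : DynkinDiagram Γ) (κ : P → Γ) : Prop :=
  EC κ ∧ NA D κ ∧ AC D κ ∧ ICE2 D κ ∧ UCB D κ 1

/-- G1: each `P_a` and each `P_b ∪ P_c` for adjacent `b, c` is a chain. -/
def G1 (D : DynkinDiagram Γ) (κ : P → Γ) : Prop :=
  (∀ a : Γ, IsChain (· ≤ ·) {x : P | κ x = a}) ∧
    ∀ b c : Γ, D.Adj b c → IsChain (· ≤ ·) {x : P | κ x = b ∨ κ x = c}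

/-- G2: the order is the minimal partial order extending the given orders on
the chains `P_a` and `P_b ∪ P_c`; i.e. every relation `x ≤ y` lies in the
reflexive transitive closure of the relations between pairs of equal or
adjacent colors. -/
def G2 (D : DynkinDiagram Γ) (κ : P → Γ) : Prop :=
  ∀ x y : P, x ≤ y →
    Relation.ReflTransGen (fun u v : P => u ≤ v ∧ (κ u = κ v ∨ D.Adj (κ u) (κ v))) x y

/-- G3: every color set `P_a` is order-isomorphic to `ℤ`. -/
def G3 (κ : P → Γ) : Prop := ∀ a : Γ, Nonempty ({x : P | κ x = a} ≃o ℤ)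

/-- G4: for adjacent colors `a, b`, every element of color `a` has a neighbor
of color `b`. -/
def G4 (D : DynkinDiagram Γ) (κ : P → Γ) : Prop :=
  ∀ a b : Γ, D.Adj a b → ∀ x : P, κ x = a → ∃ y : P, κ y = b ∧ (x ⋖ y ∨ y ⋖ x)

/-- G5: the sum of `θ (κ z) a` over the closed interval between consecutive
elements of color `a` is two. -/
def G5 (D : DynkinDiagram Γ) (κ : P → Γ) : Prop :=
  ∀ (a : Γ) (x y : P), Consecutive κ a x y →
    ∑ z ∈ Finset.Icc x y, D.θ (κ z) a = 2

/-- A full heap: a Γ-colored poset satisfying G1–G5. -/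
def FullHeap (D : DynkinDiagram Γ) (κ : P → Γ) : Prop :=
  G1 D κ ∧ G2 D κ ∧ G3 κ ∧ G4 D κ ∧ G5 D κ

/-- S1: neighbors have equal or adjacent colors and incomparable elements
have distant colors. -/
def S1 (D : DynkinDiagram Γ) (κ : P → Γ) : Prop :=
  (∀ x y : P, x ⋖ y → κ x = κ y ∨ D.Adj (κ x) (κ y)) ∧
    ∀ x y : P, ¬ x ≤ y → ¬ y ≤ x → D.Distant (κ x) (κ y)

/-- S2: the open interval between consecutive elements of color `a` contains
either exactly two elements of color adjacent to `a`, both `1`-adjacent to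
`a`, or exactly one element, whose color is `2`-adjacent to `a`. -/
def S2 (D : DynkinDiagram Γ) (κ : P → Γ) : Prop :=
  ∀ (a : Γ) (x y : P), Consecutive κ a x y →
    (∃ u ∈ Finset.Ioo x y, ∃ v ∈ Finset.Ioo x y, u ≠ v ∧
        D.θ (κ u) a = -1 ∧ D.θ (κ v) a = -1 ∧
        ∀ z ∈ Finset.Ioo x y, D.Adj (κ z) a → z = u ∨ z = v) ∨
    (∃ w : P, Finset.Ioo x y = {w} ∧ D.θ (κ w) a = -2)

/-- S3: an element maximal among elements of its color is covered by at most
one element; any such cover has color `1`-adjacent to it and is maximal among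
elements of its own color. -/
def S3 (D : DynkinDiagram Γ) (κ : P → Γ) : Prop :=
  ∀ x : P, (∀ y : P, κ y = κ x → ¬ x < y) →
    (∀ y z : P, x ⋖ y → x ⋖ z → y = z) ∧
      ∀ y : P, x ⋖ y → D.θ (κ y) (κ x) = -1 ∧ ∀ z : P, κ z = κ y → ¬ y < z

/-- S4: the underlying simple graph of the Dynkin diagram is acyclic. -/
def S4 (D : DynkinDiagram Γ) : Prop := D.graph.IsAcyclic

/-- The coloring properties of a dominant minuscule heap (the poset is
additionally required to be finite, and the coloring surjective). -/
def DominantMinusculeHeapProps (D : DynkinDiagram Γ) (κ : P → Γ) : Prop :=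
  S1 D κ ∧ S2 D κ ∧ S3 D κ ∧ S4 D

/-- The color set `P_b` is bounded above in `P`. -/
def ColorBddAbove (κ : P → Γ) (b : Γ) : Prop := ∃ u : P, ∀ x : P, κ x = b → x ≤ u

/-- The color set `P_b` is bounded below in `P`. -/
def ColorBddBelow (κ : P → Γ) (b : Γ) : Prop := ∃ l : P, ∀ x : P, κ x = b → l ≤ x


section Aux
set_option linter.unusedSectionVars false

variable {D : DynkinDiagram Γ} {κ : P → Γ}

lemma theta_eq_zero {b a : Γ} (hne : b ≠ a) (hnadj : ¬ D.Adj b a) : D.θ b a = 0 := by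
  have h1 := D.offdiag_nonpos b a hne
  have h2 : ¬ D.θ b a < 0 := fun h => hnadj ⟨hne, h⟩
  omega

lemma s1_of_dc (hEC : EC κ) (hNA : NA D κ) (hAC : AC D κ) : S1 D κ := by
  constructor
  · intro x y h; exact Or.inr (hNA x y h)
  · intro x y h1 h2
    have hne : κ x ≠ κ y := fun h => (hEC x y h).elim h1 h2
    exact ⟨hne, theta_eq_zero hne fun hadj => (hAC x y hadj).elim h1 h2⟩

lemma s2_of_dc [Finite P] (hNA : NA D κ) (hICE : ICE2 D κ) : S2 D κ := by
  classical
  intro a x y hc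
  obtain ⟨hxy, hxa, hya, hno⟩ := hc
  have hsum := hICE a x y ⟨hxy, hxa, hya, hno⟩
  set A : Finset P := (Finset.Ioo x y).filter (fun z => D.Adj (κ z) a) with hA
  have hsubA : A ⊆ Finset.Ioo x y := Finset.filter_subset _ _
  have hsumA : ∑ z ∈ A, (-D.θ (κ z) a) = 2 := by
    rw [hA, Finset.sum_filter_of_ne, hsum]
    intro z hz hnz
    by_contra hnadj
    exact hnz (by rw [theta_eq_zero (hno z hz) hnadj]; ring)
  have hone : ∀ z ∈ A, 1 ≤ -D.θ (κ z) a := fun z hz => by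
    have := (Finset.mem_filter.mp hz).2.2; omega
  have hcard2 : A.card ≤ 2 := by
    have h := Finset.card_nsmul_le_sum A (fun z => -D.θ (κ z) a) 1 hone
    rw [hsumA] at h
    simp only [nsmul_eq_mul, mul_one] at h
    exact_mod_cast h
  have hcard1 : 1 ≤ A.card := by
    rcases Finset.eq_empty_or_nonempty A with h | h
    · rw [h] at hsumA; simp at hsumA
    · exact Finset.card_pos.mpr h
  rcases (by omega : A.card = 1 ∨ A.card = 2) with h1 | h2
  · right
    obtain ⟨w, hw⟩ := Finset.card_eq_one.mp h1
    have hwA : w ∈ A := by rw [hw]; exact Finset.mem_singleton_self w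
    have hθw : D.θ (κ w) a = -2 := by
      rw [hw, Finset.sum_singleton] at hsumA; omega
    refine ⟨w, ?_, hθw⟩
    apply Finset.eq_singleton_iff_unique_mem.mpr
    refine ⟨hsubA hwA, ?_⟩
    intro z hz
    obtain ⟨hxz, hzy⟩ := Finset.mem_Ioo.mp hz
    obtain ⟨w1, hcov1, hle1⟩ := exists_covBy_le_of_lt hxz
    obtain ⟨w2, hle2, hcov2⟩ := exists_le_covBy_of_lt hzy
    have hw1A : w1 ∈ A := Finset.mem_filter.mpr
      ⟨Finset.mem_Ioo.mpr ⟨hcov1.lt, lt_of_le_of_lt hle1 hzy⟩, by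
        have h := hNA x w1 hcov1; rw [hxa] at h; exact h.symm⟩
    have hw2A : w2 ∈ A := Finset.mem_filter.mpr
      ⟨Finset.mem_Ioo.mpr ⟨lt_of_lt_of_le hxz hle2, hcov2.lt⟩, by
        have h := hNA w2 y hcov2; rwa [hya] at h⟩
    have e1 : w1 = w := by rw [hw] at hw1A; exact Finset.mem_singleton.mp hw1A
    have e2 : w2 = w := by rw [hw] at hw2A; exact Finset.mem_singleton.mp hw2A
    exact le_antisymm (e2 ▸ hle2) (e1 ▸ hle1)
  · left
    obtain ⟨u, v, huv, hAuv⟩ := Finset.card_eq_two.mp h2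
    have huA : u ∈ A := by rw [hAuv]; simp
    have hvA : v ∈ A := by rw [hAuv]; simp
    have hsum2 : -D.θ (κ u) a + -D.θ (κ v) a = 2 := by
      rw [hAuv, Finset.sum_pair huv] at hsumA; exact hsumA
    have h1u := hone u huA
    have h1v := hone v hvA
    refine ⟨u, hsubA huA, v, hsubA hvA, huv, by omega, by omega, ?_⟩
    intro z hz hadj
    have hzA : z ∈ A := Finset.mem_filter.mpr ⟨hz, hadj⟩
    rw [hAuv] at hzA
    simpa using hzA

lemma s3_of_dc [Finite P] (hNA : NA D κ) (hUCB : UCB D κ 1) : S3 D κ := by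
  classical
  intro x hmax
  obtain ⟨hfin, hsum⟩ := hUCB x hmax
  have hmem : ∀ y : P, x ⋖ y → y ∈ hfin.toFinset := fun y hy =>
    hfin.mem_toFinset.mpr ⟨Set.mem_univ y, hy.lt, (hNA x y hy).symm⟩
  have hone : ∀ y ∈ hfin.toFinset, 1 ≤ -D.θ (κ y) (κ x) := by
    intro y hy
    have := (hfin.mem_toFinset.mp hy).2.2.2
    omega
  have hpair : ∀ y z, y ∈ hfin.toFinset → z ∈ hfin.toFinset → y ≠ z → False := by
    intro y z hy hz hne
    have hsub : {y, z} ⊆ hfin.toFinset := by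
      intro t ht
      rcases Finset.mem_insert.mp ht with rfl | ht
      · exact hy
      · rw [Finset.mem_singleton.mp ht]; exact hz
    have h2 : 2 ≤ ∑ w ∈ hfin.toFinset, (-D.θ (κ w) (κ x)) := by
      calc (2:ℤ) = 1 + 1 := by ring
      _ ≤ -D.θ (κ y) (κ x) + -D.θ (κ z) (κ x) := add_le_add (hone y hy) (hone z hz)
      _ = ∑ w ∈ ({y, z} : Finset P), (-D.θ (κ w) (κ x)) := (Finset.sum_pair (f := fun w => -D.θ (κ w) (κ x)) hne).symm
      _ ≤ _ := Finset.sum_le_sum_of_subset_of_nonneg hsub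
          (fun i hi _ => le_trans zero_le_one (hone i hi))
    omega
  constructor
  · intro y z hy hz
    by_contra hne
    exact hpair y z (hmem y hy) (hmem z hz) hne
  · intro y hy
    have hyU := hmem y hy
    have hsingle : hfin.toFinset = {y} :=
      Finset.eq_singleton_iff_unique_mem.mpr
        ⟨hyU, fun z hz => by_contra fun hne => hpair z y hz hyU hne⟩
    rw [hsingle, Finset.sum_singleton] at hsum
    have h1 := hone y hyU
    refine ⟨by omega, ?_⟩
    intro z hz hlt
    have hzU : z ∈ hfin.toFinset := hfin.mem_toFinset.mpr
      ⟨Set.mem_univ z, hy.lt.trans hlt, by rw [hz]; exact (hNA x y hy).symm⟩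
    exact hpair z y hzU hyU (ne_of_gt hlt)

lemma s4_of_dc [Finite P] (hAC : AC D κ) (hUCB : UCB D κ 1)
    (hsurj : Function.Surjective κ) : S4 D := by
  classical
  letI : Fintype P := Fintype.ofFinite P
  have claim2 : ∀ x : P, (∀ y : P, κ y = κ x → ¬ x < y) →
      ∀ y z : P, x < y → x < z → D.Adj (κ y) (κ x) → D.Adj (κ z) (κ x) → y = z := by
    intro x hmax y z hy hz hay haz
    obtain ⟨hfin, hsum⟩ := hUCB x hmax
    by_contra hne
    have hyU : y ∈ hfin.toFinset := hfin.mem_toFinset.mpr ⟨Set.mem_univ _, hy, hay⟩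
    have hzU : z ∈ hfin.toFinset := hfin.mem_toFinset.mpr ⟨Set.mem_univ _, hz, haz⟩
    have hone : ∀ w ∈ hfin.toFinset, 1 ≤ -D.θ (κ w) (κ x) := by
      intro w hw
      have := (hfin.mem_toFinset.mp hw).2.2.2
      omega
    have hsub : {y, z} ⊆ hfin.toFinset := by
      intro t ht
      rcases Finset.mem_insert.mp ht with rfl | ht
      · exact hyU
      · rw [Finset.mem_singleton.mp ht]; exact hzU
    have h2 : 2 ≤ ∑ w ∈ hfin.toFinset, (-D.θ (κ w) (κ x)) := by
      calc (2:ℤ) = 1 + 1 := by ring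
      _ ≤ -D.θ (κ y) (κ x) + -D.θ (κ z) (κ x) := add_le_add (hone y hyU) (hone z hzU)
      _ = ∑ w ∈ ({y, z} : Finset P), (-D.θ (κ w) (κ x)) :=
          (Finset.sum_pair (f := fun w => -D.θ (κ w) (κ x)) hne).symm
      _ ≤ _ := Finset.sum_le_sum_of_subset_of_nonneg hsub
          (fun i hi _ => le_trans zero_le_one (hone i hi))
    omega
  have hm : ∀ a : Γ, ∃ x : P, κ x = a ∧ ∀ y : P, κ y = κ x → ¬ x < y := by
    intro a
    obtain ⟨x0, hx0⟩ := hsurj a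
    obtain ⟨mm, hmmem, hmmax⟩ : ∃ m ∈ Finset.univ.filter (fun x : P => κ x = a),
        ∀ x ∈ Finset.univ.filter (fun x : P => κ x = a), ¬ m < x := by
      obtain ⟨i, hi⟩ := Finset.exists_maximal
        (s := Finset.univ.filter (fun x : P => κ x = a)) ⟨x0, by simp [hx0]⟩
      exact ⟨i, hi.1, fun x hx hlt => lt_irrefl _ (lt_of_lt_of_le hlt (hi.2 hx hlt.le))⟩
    have hma : κ mm = a := (Finset.mem_filter.mp hmmem).2
    exact ⟨mm, hma, fun y hyc =>
      hmmax y (Finset.mem_filter.mpr ⟨Finset.mem_univ y, by rw [hyc, hma]⟩)⟩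
  choose m hmcol hmmax using hm
  intro v c hc
  have hsupne : c.support.toFinset.Nonempty :=
    ⟨v, List.mem_toFinset.mpr c.start_mem_support⟩
  obtain ⟨p, hpmem, hpmin⟩ : ∃ p ∈ c.support.toFinset.image m,
      ∀ x ∈ c.support.toFinset.image m, ¬ x < p := by
    obtain ⟨i, hi⟩ := Finset.exists_minimal (s := c.support.toFinset.image m)
      (hsupne.image m)
    exact ⟨i, hi.1, fun x hx hlt => lt_irrefl _ (lt_of_lt_of_le hlt (hi.2 hx hlt.le))⟩
  obtain ⟨a, haS, hap⟩ := Finset.mem_image.mp hpmem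
  have ha : a ∈ c.support := List.mem_toFinset.mp haS
  have hamin : ∀ b, b ∈ c.support → ¬ m b < m a := by
    intro b hb hlt
    exact hpmin (m b) (Finset.mem_image_of_mem m (List.mem_toFinset.mpr hb)) (hap ▸ hlt)
  have hc' := hc.rotate ha
  have hsupp : ∀ x, x ∈ (c.rotate a ha).support → x ∈ c.support := by
    intro x hx
    have hrot := SimpleGraph.Walk.support_rotate c a ha
    rw [SimpleGraph.Walk.support_eq_cons (c.rotate a ha)] at hx
    rcases List.mem_cons.mp hx with rfl | hx
    · exact ha
    · exact List.mem_of_mem_tail (hrot.mem_iff.mp hx)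
  obtain ⟨b, hab, q, hq⟩ := SimpleGraph.Walk.not_nil_iff.mp hc'.not_nil
  rw [hq] at hc' hsupp
  -- last edge
  have hba : a ≠ b := hab.ne
  obtain ⟨d, had, r, hr⟩ := SimpleGraph.Walk.exists_eq_cons_of_ne hba q.reverse
  -- b ≠ d
  have hbd : b ≠ d := by
    rintro rfl
    have hedge : s(a, b) ∈ q.edges := by
      have h1 : s(a, b) ∈ q.reverse.edges := by
        rw [hr, SimpleGraph.Walk.edges_cons]
        exact List.mem_cons_self
      rwa [SimpleGraph.Walk.edges_reverse, List.mem_reverse] at h1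
    have htrail := hc'.isTrail
    rw [SimpleGraph.Walk.isTrail_cons] at htrail
    exact htrail.2 hedge
  -- memberships
  have hbmem : b ∈ c.support := hsupp b (by
    rw [SimpleGraph.Walk.support_cons]
    exact List.mem_cons_of_mem _ q.start_mem_support)
  have hdmem : d ∈ c.support := hsupp d (by
    rw [SimpleGraph.Walk.support_cons]
    refine List.mem_cons_of_mem _ ?_
    have : d ∈ q.reverse.support := by
      rw [hr, SimpleGraph.Walk.support_cons]
      exact List.mem_cons_of_mem _ r.start_mem_support
    rwa [SimpleGraph.Walk.support_reverse, List.mem_reverse] at this)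
  -- Dynkin adjacency
  have hDab : D.Adj a b := hab
  have hDad : D.Adj a d := had
  -- m a < m b and m a < m d
  have hlt : ∀ e : Γ, e ∈ c.support → D.Adj a e → m a < m e := by
    intro e he hDae
    have hadj : D.Adj (κ (m a)) (κ (m e)) := by rw [hmcol, hmcol]; exact hDae
    have hne : m a ≠ m e := fun h => hDae.1 (by rw [← hmcol a, ← hmcol e, h])
    rcases hAC (m a) (m e) hadj with h | h
    · exact lt_of_le_of_ne h hne
    · exact absurd (lt_of_le_of_ne h hne.symm) (hamin e he)
  have hltb := hlt b hbmem hDab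
  have hltd := hlt d hdmem hDad
  have heq : m b = m d := by
    refine claim2 (m a) ?_ (m b) (m d) hltb hltd ?_ ?_
    · intro y hy
      exact hmmax a y hy
    · rw [hmcol, hmcol]; exact hDab.symm
    · rw [hmcol, hmcol]; exact hDad.symm
  exact hbd (by rw [← hmcol b, ← hmcol d, heq])
lemma ec_of_heap (hS1 : S1 D κ) : EC κ := by
  intro x y h
  by_contra hc
  push_neg at hc
  exact (hS1.2 x y hc.1 hc.2).1 h

lemma ac_of_heap (hS1 : S1 D κ) : AC D κ := by
  intro x y h
  by_contra hc
  push_neg at hc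
  exact absurd (hS1.2 x y hc.1 hc.2).2 (by have := h.2; omega)

lemma na_of_heap (hS1 : S1 D κ) (hS2 : S2 D κ) : NA D κ := by
  intro x y h
  rcases hS1.1 x y h with heq | hadj
  · exfalso
    have hcons : Consecutive κ (κ x) x y := by
      refine ⟨h.lt, rfl, heq.symm, ?_⟩
      intro z hz
      obtain ⟨h1, h2⟩ := Finset.mem_Ioo.mp hz
      exact (h.2 h1 h2).elim
    rcases hS2 (κ x) x y hcons with ⟨u, hu, _⟩ | ⟨w, hw, _⟩
    · obtain ⟨h1, h2⟩ := Finset.mem_Ioo.mp hu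
      exact h.2 h1 h2
    · have : w ∈ Finset.Ioo x y := hw ▸ Finset.mem_singleton_self w
      obtain ⟨h1, h2⟩ := Finset.mem_Ioo.mp this
      exact h.2 h1 h2
  · exact hadj

lemma ice2_of_heap (hS2 : S2 D κ) : ICE2 D κ := by
  classical
  intro a x y hc
  obtain ⟨hxy, hxa, hya, hno⟩ := hc
  rcases hS2 a x y ⟨hxy, hxa, hya, hno⟩ with
    ⟨u, hu, v, hv, huv, hθu, hθv, huniq⟩ | ⟨w, hw, hθw⟩
  · have hfil : (Finset.Ioo x y).filter (fun z => D.Adj (κ z) a) = {u, v} := by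
      apply Finset.ext
      intro z
      simp only [Finset.mem_filter, Finset.mem_insert, Finset.mem_singleton]
      constructor
      · rintro ⟨hz, hadj⟩
        exact huniq z hz hadj
      · rintro (rfl | rfl)
        · exact ⟨hu, hno _ hu, by omega⟩
        · exact ⟨hv, hno _ hv, by omega⟩
    rw [← Finset.sum_filter_of_ne (p := fun z => D.Adj (κ z) a)
      (fun z hz hnz => by
        by_contra hnadj
        exact hnz (by rw [theta_eq_zero (hno z hz) hnadj]; ring)),
      hfil, Finset.sum_pair huv, hθu, hθv]
    ring
  · rw [hw, Finset.sum_singleton, hθw]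
    ring

lemma aboveChain [Finite P] (hS1 : S1 D κ) (hS3 : S3 D κ) :
    ∀ n (x z : P), (Finset.Ioc x z).card ≤ n → (∀ y, κ y = κ x → ¬ x < y) → x < z →
    ∃ p : D.graph.Walk (κ x) (κ z), p.IsPath ∧ 1 ≤ p.length ∧ (x ⋖ z ∨ 2 ≤ p.length) ∧
      ∀ c ∈ p.support, c ≠ κ x →
        ∃ w : P, x < w ∧ w ≤ z ∧ κ w = c ∧ (∀ y, κ y = κ w → ¬ w < y) := by
  intro n
  induction n with
  | zero =>
    intro x z hcard hmax hlt
    exact absurd (Finset.card_pos.mpr ⟨z, Finset.mem_Ioc.mpr ⟨hlt, le_rfl⟩⟩) (by omega)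
  | succ n ih =>
    intro x z hcard hmax hlt
    obtain ⟨y0, hcov, hle⟩ := exists_covBy_le_of_lt hlt
    have hadjcol : D.Adj (κ x) (κ y0) := by
      rcases hS1.1 x y0 hcov with heq | hadj
      · exact absurd hcov.lt (hmax y0 heq.symm)
      · exact hadj
    obtain ⟨hθ, hmaxy0⟩ := (hS3 x hmax).2 y0 hcov
    have edge : D.graph.Adj (κ x) (κ y0) := hadjcol
    rcases eq_or_lt_of_le hle with rfl | hlt2
    · refine ⟨SimpleGraph.Walk.cons edge SimpleGraph.Walk.nil, ?_, ?_, Or.inl hcov, ?_⟩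
      · rw [SimpleGraph.Walk.cons_isPath_iff]
        exact ⟨SimpleGraph.Walk.IsPath.nil, by simp [hadjcol.1]⟩
      · simp
      · intro c hc hcne
        simp only [SimpleGraph.Walk.support_cons, SimpleGraph.Walk.support_nil,
          List.mem_cons, List.mem_singleton] at hc
        rcases hc with rfl | hc
        · exact absurd rfl hcne
        · rcases hc with rfl | hc
          · exact ⟨y0, hcov.lt, le_rfl, rfl, hmaxy0⟩
          · simp at hc
    · have hcard2 : (Finset.Ioc y0 z).card ≤ n := by
        have hss : Finset.Ioc y0 z ⊂ Finset.Ioc x z := by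
          constructor
          · intro w hw
            obtain ⟨h1, h2⟩ := Finset.mem_Ioc.mp hw
            exact Finset.mem_Ioc.mpr ⟨hcov.lt.trans h1, h2⟩
          · intro hsub
            have : y0 ∈ Finset.Ioc y0 z := hsub (Finset.mem_Ioc.mpr ⟨hcov.lt, hle⟩)
            exact absurd (Finset.mem_Ioc.mp this).1 (lt_irrefl y0)
        have := Finset.card_lt_card hss
        omega
      obtain ⟨p', hpath', hlen', _, hsupp'⟩ := ih y0 z hcard2 hmaxy0 hlt2
      have hxnot : κ x ∉ p'.support := by
        intro hmem
        by_cases hcase : κ x = κ y0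
        · exact hadjcol.1 hcase
        · obtain ⟨w, hw1, _, hw3, _⟩ := hsupp' (κ x) hmem hcase
          exact hmax w hw3 (hcov.lt.trans hw1)
      refine ⟨SimpleGraph.Walk.cons edge p', hpath'.cons hxnot, ?_, ?_, ?_⟩
      · simp
      · right
        have : 1 ≤ p'.length := hlen'
        simp only [SimpleGraph.Walk.length_cons]
        omega
      · intro c hc hcne
        rw [SimpleGraph.Walk.support_cons] at hc
        rcases List.mem_cons.mp hc with rfl | hc
        · exact absurd rfl hcne
        · by_cases hcase : c = κ y0
          · exact ⟨y0, hcov.lt, hle, hcase.symm, hmaxy0⟩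
          · obtain ⟨w, hw1, hw2, hw3, hw4⟩ := hsupp' c hc hcase
            exact ⟨w, hcov.lt.trans hw1, hw2, hw3, hw4⟩

lemma ucb_of_heap [Finite P] (hS1 : S1 D κ) (hS3 : S3 D κ) (hS4 : S4 D) :
    UCB D κ 1 := by
  classical
  intro x hmax
  refine ⟨Set.toFinite _, ?_⟩
  set hfin : (USet D κ Set.univ x).Finite := Set.toFinite _
  have key : ∀ y ∈ hfin.toFinset, x ⋖ y := by
    intro y hy
    obtain ⟨-, hlty, hadj⟩ := hfin.mem_toFinset.mp hy
    obtain ⟨p, hpath, hlen, hdisj, -⟩ := aboveChain hS1 hS3 (Finset.Ioc x y).card x y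
      le_rfl hmax hlty
    rcases hdisj with h | h
    · exact h
    · exfalso
      have hedge : D.graph.Adj (κ x) (κ y) := hadj.symm
      have hq : (SimpleGraph.Walk.cons hedge SimpleGraph.Walk.nil :
          D.graph.Walk (κ x) (κ y)).IsPath := by
        rw [SimpleGraph.Walk.cons_isPath_iff]
        refine ⟨SimpleGraph.Walk.IsPath.nil, ?_⟩
        simp only [SimpleGraph.Walk.support_nil, List.mem_singleton]
        exact fun hh => hadj.1 hh.symm
      have := SimpleGraph.isAcyclic_iff_path_unique.mp hS4 ⟨p, hpath⟩ ⟨_, hq⟩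
      have hlen2 : p.length = 1 := by
        have := congrArg (fun q : D.graph.Path (κ x) (κ y) => q.1.length) this
        simpa using this
      omega
  rcases Finset.eq_empty_or_nonempty hfin.toFinset with he | ⟨y, hy⟩
  · rw [he]
    simp
  · have hcovy := key y hy
    have hsingle : hfin.toFinset = {y} := by
      apply Finset.eq_singleton_iff_unique_mem.mpr
      exact ⟨hy, fun z hz => (hS3 x hmax).1 z y (key z hz) hcovy⟩
    rw [hsingle, Finset.sum_singleton]
    have := ((hS3 x hmax).2 y hcovy).1
    omega
end Aux
/-- a finite Γ-colored poset is Γ-colored d-complete iff it is a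
dominant minuscule heap. -/
theorem statement6 [Finite P] (D : DynkinDiagram Γ) (κ : P → Γ)
    (hsurj : Function.Surjective κ) :
    DComplete D κ ↔ DominantMinusculeHeapProps D κ := by
  constructor
  · rintro ⟨hEC, hNA, hAC, hICE, hUCB⟩
    exact ⟨s1_of_dc hEC hNA hAC, s2_of_dc hNA hICE, s3_of_dc hNA hUCB,
      s4_of_dc hAC hUCB hsurj⟩
  · rintro ⟨hS1, hS2, hS3, hS4⟩
    exact ⟨ec_of_heap hS1, na_of_heap hS1 hS2, ac_of_heap hS1,
      ice2_of_heap hS2, ucb_of_heap hS1 hS3 hS4⟩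

end GCP
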